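/- With ω as above (τ(ω(x)) + τ(ω(x)+x) = 0, τ strictly decreasing with τ(x)² = ρ(x) - D), for all x ≥ 0 and 0 ≤ m ≤ x/ε: ω(ε) satisfies the interleaving inequalities ω(x + ε) ≤ ω(x) and ω(x+ε) + (x+ε) ≥ ω(x) + x; that is, the intervals J_x = [ω(x), ω(x) + x] are nested increasing in x. -/

import Mathlib

theorem stmt_15 (ρ τ ω : ℝ → ℝ) (z₀ D ε : ℝ)
    (hε : 0 < ε) (hcont : Continuous ρ)
    (hdec : StrictAntiOn ρ (Set.Iic z₀))
    (hinc : StrictMonoOn ρ (Set.Ici z₀))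
    (hD : D = ρ z₀)
    (hτanti : StrictAnti τ)
    (hτsq : ∀ x, (τ x) ^ 2 = ρ x - D)
    (hτpos : ∀ x < z₀, 0 < τ x)
    (hω : ∀ x, τ (ω x) + τ (ω x + x) = 0) :
    (∀ x : ℝ, 0 ≤ x → ω (x + ε) ≤ ω x ∧ ω x + x ≤ ω (x + ε) + (x + ε)) ∧
    ∀ x y : ℝ, 0 ≤ x → x ≤ y →
      Set.Icc (ω x) (ω x + x) ⊆ Set.Icc (ω y) (ω y + y) := by
  have key : ∀ x y : ℝ, x ≤ y → ω y ≤ ω x ∧ ω x + x ≤ ω y + y := by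
    intro x y hxy
    constructor
    · by_contra h
      push_neg at h
      have h1 : τ (ω y) < τ (ω x) := hτanti h
      have h4 : τ (ω x + x) < τ (ω y + y) := by linarith [hω x, hω y]
      have h5 : ω y + y < ω x + x := hτanti.lt_iff_gt.mp h4
      linarith
    · by_contra h
      push_neg at h
      have h1 : τ (ω x + x) < τ (ω y + y) := hτanti h
      have h4 : τ (ω y) < τ (ω x) := by linarith [hω x, hω y]
      have h5 : ω x < ω y := hτanti.lt_iff_gt.mp h4
      linarith
  refine ⟨fun x _ => ?_, fun x y _ hxy => ?_⟩
  · exact key x (x + ε) (by linarith)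
  · obtain ⟨h1, h2⟩ := key x y hxy
    exact Set.Icc_subset_Icc h1 h2
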